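/- The iterative Metropolized Gibbs kernel dominates the Metropolized Gibbs kernel in the Peskun order: for all i ≠ j, P^{IMG}_{ij} ≥ P^{MG}_{ij}. -/

import Mathlib

/-- `imgS w j = ∑_{k < j} y_k`, the partial sums of the `y`-sequence of the
iterative Metropolized Gibbs sampler built from the (`0`-indexed) weight
sequence `w`. -/
noncomputable def imgS (w : ℕ → ℝ) : ℕ → ℝ
  | 0 => 0
  | j + 1 =>
      imgS w j +
        (if j = 0 then w 0 / (1 - w 0)
         else w j * (1 - imgS w j) / (1 - ∑ k ∈ Finset.range (j + 1), w k))

/-- The `y`-sequence of the iterative Metropolized Gibbs sampler: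
`y 0 = w 0 / (1 - w 0)` and, for `j > 0`,
`y j = w j * (1 - ∑_{k < j} y k) / (1 - ∑_{k ≤ j} w k)`. -/
noncomputable def imgY (w : ℕ → ℝ) (j : ℕ) : ℝ :=
  if j = 0 then w 0 / (1 - w 0)
  else w j * (1 - imgS w j) / (1 - ∑ k ∈ Finset.range (j + 1), w k)

/-- The iterative Metropolized Gibbs kernel: `PIMG π i j` is the transition
probability from state `j` to state `i` (states `0`-indexed, ordered by
increasing weight).  `PIMG π i j = y i` for `i < j`, `(π i / π j) * y j` for
`i > j`, `1 - ∑_{k < n - 1} y k` at the last diagonal entry, and `0` on the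
remaining diagonal entries. -/
noncomputable def PIMG {n : ℕ} (π : Fin n → ℝ) (i j : Fin n) : ℝ :=
  let w : ℕ → ℝ := fun k => if h : k < n then π ⟨k, h⟩ else 0
  if (i : ℕ) < (j : ℕ) then imgY w i
  else if (j : ℕ) < (i : ℕ) then (π i / π j) * imgY w j
  else if (i : ℕ) = n - 1 then 1 - ∑ k ∈ Finset.range (n - 1), imgY w k
  else 0

/-- The Metropolized Gibbs kernel: off-diagonal transition probability from
state `j` to state `i`. -/
noncomputable def PMG {n : ℕ} (π : Fin n → ℝ) (i j : Fin n) : ℝ :=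
  min (π i / (1 - π j)) (π i / (1 - π i))

section aux
variable {n : ℕ} {w : ℕ → ℝ}

lemma sum_tail (hsum : ∑ k ∈ Finset.range n, w k = 1) {j : ℕ} (hj : j + 1 ≤ n) :
    1 - ∑ k ∈ Finset.range (j + 1), w k = ∑ k ∈ Finset.Ico (j + 1) n, w k := by
  have h := Finset.sum_Ico_consecutive w (Nat.zero_le (j + 1)) hj
  rw [Finset.range_eq_Ico] at hsum ⊢
  linarith

lemma Dpos (hpos : ∀ k < n, 0 < w k) (hsum : ∑ k ∈ Finset.range n, w k = 1)
    {j : ℕ} (hj : j + 1 < n) : 0 < 1 - ∑ k ∈ Finset.range (j + 1), w k := by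
  rw [sum_tail hsum hj.le]
  apply Finset.sum_pos
  · intro k hk; exact hpos k (Finset.mem_Ico.mp hk).2
  · exact ⟨j + 1, Finset.mem_Ico.mpr ⟨le_refl _, hj⟩⟩

lemma Dsub_nonneg (hpos : ∀ k < n, 0 < w k) (hsum : ∑ k ∈ Finset.range n, w k = 1)
    (hmono : ∀ ⦃a b : ℕ⦄, a ≤ b → b < n → w a ≤ w b)
    {j : ℕ} (hj : j + 1 < n) :
    0 ≤ 1 - ∑ k ∈ Finset.range (j + 1), w k - w j := by
  rw [sum_tail hsum hj.le]
  have h1 : w (j + 1) ≤ ∑ k ∈ Finset.Ico (j + 1) n, w k := by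
    apply Finset.single_le_sum (f := w)
    · intro k hk; exact (hpos k (Finset.mem_Ico.mp hk).2).le
    · exact Finset.mem_Ico.mpr ⟨le_refl _, hj⟩
  have h2 : w j ≤ w (j + 1) := hmono (Nat.le_succ j) hj
  linarith

lemma imgS_succ (j : ℕ) :
    imgS w (j + 1) = imgS w j +
      w j * (1 - imgS w j) / (1 - ∑ k ∈ Finset.range (j + 1), w k) := by
  cases j with
  | zero => simp [imgS]
  | succ m => simp [imgS]

lemma key (hpos : ∀ k < n, 0 < w k) (hlt : ∀ k < n, w k < 1)
    (hmono : ∀ ⦃a b : ℕ⦄, a ≤ b → b < n → w a ≤ w b)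
    (hsum : ∑ k ∈ Finset.range n, w k = 1) :
    ∀ j, j < n → 1 - ∑ k ∈ Finset.range (j + 1), w k ≤ (1 - imgS w j) * (1 - w j) := by
  intro j
  induction j with
  | zero => intro _; simp [imgS, Finset.sum_range_one]
  | succ m ih =>
    intro hm1
    have hm : m < n := Nat.lt_of_succ_lt hm1
    have hD : 0 < 1 - ∑ k ∈ Finset.range (m + 1), w k := Dpos hpos hsum hm1
    have hIH := ih hm
    have hDp : 0 ≤ 1 - ∑ k ∈ Finset.range (m + 1), w k - w m := Dsub_nonneg hpos hsum hmono hm1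
    have hp1 : 0 < 1 - w m := by linarith [hlt m hm]
    have hq1 : 0 ≤ 1 - w (m + 1) := by linarith [hlt (m + 1) hm1]
    have hpq : w m ≤ w (m + 1) := hmono (Nat.le_succ m) hm1
    have h1D : 0 ≤ ∑ k ∈ Finset.range (m + 1), w k := by
      apply Finset.sum_nonneg
      intro k hk
      exact (hpos k (lt_of_lt_of_le (Finset.mem_range.mp hk) hm1.le)).le
    set D := 1 - ∑ k ∈ Finset.range (m + 1), w k with hDdef
    set a := 1 - imgS w m with hadef
    have hstep : 1 - imgS w (m + 1) = a * (D - w m) / D := by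
      rw [imgS_succ, ← hDdef, hadef]
      field_simp
      ring
    rw [Finset.sum_range_succ, hstep]
    have hx : 0 ≤ (D - w m) * (1 - w (m + 1)) := mul_nonneg hDp hq1
    have h1 : D * ((D - w m) * (1 - w (m + 1))) ≤
        a * (1 - w m) * ((D - w m) * (1 - w (m + 1))) :=
      mul_le_mul_of_nonneg_right hIH hx
    have h1D' : 0 ≤ 1 - D := by rw [hDdef]; linarith
    have hS : 0 ≤ D * ((w (m + 1) - w m) * (1 - D)) :=
      mul_nonneg hD.le (mul_nonneg (sub_nonneg.mpr hpq) h1D')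
    have h2 : D * ((D - w (m + 1)) * (1 - w m)) ≤ D * ((D - w m) * (1 - w (m + 1))) := by
      nlinarith [hS]
    have goal' : (D - w (m + 1)) * D ≤ a * (D - w m) * (1 - w (m + 1)) := by
      have h3 : (D - w (m + 1)) * D * (1 - w m) ≤
          a * (D - w m) * (1 - w (m + 1)) * (1 - w m) := by nlinarith [h1, h2]
      exact le_of_mul_le_mul_right h3 hp1
    calc 1 - (∑ k ∈ Finset.range (m + 1), w k + w (m + 1)) = D - w (m + 1) := by ring
      _ ≤ a * (D - w m) * (1 - w (m + 1)) / D := by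
          rw [le_div_iff₀ hD]; exact goal'
      _ = a * (D - w m) / D * (1 - w (m + 1)) := by ring
end aux

lemma imgY_ge {n : ℕ} {w : ℕ → ℝ} (hpos : ∀ k < n, 0 < w k) (hlt : ∀ k < n, w k < 1)
    (hmono : ∀ ⦃a b : ℕ⦄, a ≤ b → b < n → w a ≤ w b)
    (hsum : ∑ k ∈ Finset.range n, w k = 1) {j : ℕ} (hj : j + 1 < n) :
    w j / (1 - w j) ≤ imgY w j := by
  unfold imgY
  by_cases h0 : j = 0
  · rw [if_pos h0, h0]
  · rw [if_neg h0]
    have hjn : j < n := Nat.lt_of_succ_lt hj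
    have hD : 0 < 1 - ∑ k ∈ Finset.range (j + 1), w k := Dpos hpos hsum hj
    have hk := key hpos hlt hmono hsum j hjn
    have hwj : 0 < w j := hpos j hjn
    have hp1 : 0 < 1 - w j := by linarith [hlt j hjn]
    rw [div_le_div_iff₀ hp1 hD]
    nlinarith [mul_le_mul_of_nonneg_left hk hwj.le]


/-- the iterative Metropolized Gibbs kernel dominates the
Metropolized Gibbs kernel in the Peskun order: `PIMG i j ≥ PMG i j` for all
`i ≠ j`. -/
theorem PIMG_dominates_PMG {n : ℕ} (hn : 2 ≤ n) (π : Fin n → ℝ)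
    (hpos : ∀ i, 0 < π i) (hsum : ∑ i, π i = 1) (hmono : Monotone π)
    (hlt : ∀ i, π i < 1) :
    ∀ i j, i ≠ j → PMG π i j ≤ PIMG π i j := by
  intro i j hij
  set w : ℕ → ℝ := fun k => if h : k < n then π ⟨k, h⟩ else 0 with hw
  have hwk : ∀ k : Fin n, w (k : ℕ) = π k := by
    intro k; simp [hw, k.isLt]
  have hpos' : ∀ k < n, 0 < w k := by
    intro k hk; simpa [hw, hk] using hpos ⟨k, hk⟩
  have hlt' : ∀ k < n, w k < 1 := by
    intro k hk; simpa [hw, hk] using hlt ⟨k, hk⟩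
  have hmono' : ∀ ⦃a b : ℕ⦄, a ≤ b → b < n → w a ≤ w b := by
    intro a b hab hb
    have ha : a < n := lt_of_le_of_lt hab hb
    simp only [hw, dif_pos ha, dif_pos hb]
    exact hmono (show (⟨a, ha⟩ : Fin n) ≤ ⟨b, hb⟩ from hab)
  have hsum' : ∑ k ∈ Finset.range n, w k = 1 := by
    rw [← Fin.sum_univ_eq_sum_range, ← hsum]
    exact Finset.sum_congr rfl fun k _ => hwk k
  simp only [PMG, PIMG]
  rw [← hw]
  rcases lt_trichotomy (i : ℕ) (j : ℕ) with h | h | h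
  · rw [if_pos h]
    have hi1 : (i : ℕ) + 1 < n := lt_of_le_of_lt (Nat.succ_le_of_lt h) j.isLt
    calc min (π i / (1 - π j)) (π i / (1 - π i)) ≤ π i / (1 - π i) := min_le_right _ _
      _ = w i / (1 - w i) := by rw [hwk]
      _ ≤ imgY w i := imgY_ge hpos' hlt' hmono' hsum' hi1
  · exact absurd (Fin.ext h) hij
  · rw [if_neg (by omega), if_pos h]
    have hj1 : (j : ℕ) + 1 < n := lt_of_le_of_lt (Nat.succ_le_of_lt h) i.isLt
    have hY : π j / (1 - π j) ≤ imgY w j := by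
      rw [← hwk]; exact imgY_ge hpos' hlt' hmono' hsum' hj1
    have hπj : 0 < π j := hpos j
    have h1j : 0 < 1 - π j := by linarith [hlt j]
    calc min (π i / (1 - π j)) (π i / (1 - π i)) ≤ π i / (1 - π j) := min_le_left _ _
      _ = π i / π j * (π j / (1 - π j)) := by
          field_simp
      _ ≤ π i / π j * imgY w j :=
          mul_le_mul_of_nonneg_left hY (div_nonneg (hpos i).le hπj.le)
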